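/- Suppose the rate coefficients satisfy the extended growth condition: there exist C ≥ 1, Q ≥ 1 and nonnegative reals q_{i,k} with ∑_{k=1}^{i} k(i−k+1) q_{i,k} ≤ Q·i for every i ≥ 1, and a(i,j;k) ≤ C(i−k+1)(j+k) q_{i,k} for all 1 ≤ k ≤ i and ALL j ≥ 0 (including j = 0). Let T ∈ (0,∞] and let c = (c_i) be a mild solution of the DGED system (isolated or non-isolated) on [0,T) such that t ↦ ∑_{i=1}^∞ i c_i(t) is constant on [0,T). Then for each i ∈ ℕ the component c_i is continuously differentiable on [0,T). -/
import Mathlib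


open Finset MeasureTheory

/-- Infinite-system operator `Q_{1,i}`. -/
noncomputable def Qi1 (a : ℕ → ℕ → ℕ → ℝ) (c : ℕ → ℝ) (i : ℕ) : ℝ :=
  ∑' p : ℕ × ℕ, if 1 ≤ p.1 then a (i + p.1) p.2 p.1 * c (i + p.1) * c p.2 else 0

/-- Infinite-system operator `Q_{2,i}`. -/
noncomputable def Qi2 (a : ℕ → ℕ → ℕ → ℝ) (c : ℕ → ℝ) (i : ℕ) : ℝ :=
  -∑' p : ℕ × ℕ, if 1 ≤ p.1 ∧ p.1 ≤ p.2 then a p.2 i p.1 * c p.2 * c i else 0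

/-- Infinite-system operator `Q_{3,i}` (equal to `0` when `i = 0`). -/
noncomputable def Qi3 (a : ℕ → ℕ → ℕ → ℝ) (c : ℕ → ℝ) (i : ℕ) : ℝ :=
  ∑ k ∈ Finset.Icc 1 i, ∑' j : ℕ, if k ≤ j then a j (i - k) k * c j * c (i - k) else 0

/-- Infinite-system operator `Q_{4,i}` (equal to `0` when `i = 0`). -/
noncomputable def Qi4 (a : ℕ → ℕ → ℕ → ℝ) (c : ℕ → ℝ) (i : ℕ) : ℝ :=
  -∑ k ∈ Finset.Icc 1 i, ∑' j : ℕ, a i j k * c j * c i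

/-- Summability of all the series defining the operators `Q_{j,i}`. -/
def QSummable (a : ℕ → ℕ → ℕ → ℝ) (c : ℕ → ℝ) (i : ℕ) : Prop :=
  Summable (fun p : ℕ × ℕ =>
    if 1 ≤ p.1 then a (i + p.1) p.2 p.1 * c (i + p.1) * c p.2 else 0) ∧
  Summable (fun p : ℕ × ℕ =>
    if 1 ≤ p.1 ∧ p.1 ≤ p.2 then a p.2 i p.1 * c p.2 * c i else 0) ∧
  (∀ k ∈ Finset.Icc 1 i,
    Summable (fun j : ℕ => if k ≤ j then a j (i - k) k * c j * c (i - k) else 0)) ∧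
  (∀ k ∈ Finset.Icc 1 i, Summable (fun j : ℕ => a i j k * c j * c i))

/-- `c` is a mild solution of the isolated DGED system on the set `S` with
initial datum `c0 ∈ X_{0,1}^+`. -/
def MildSolIso (a : ℕ → ℕ → ℕ → ℝ) (c0 : ℕ → ℝ) (S : Set ℝ) (c : ℕ → ℝ → ℝ) : Prop :=
  (∀ i, c i 0 = c0 i) ∧
  (∀ t ∈ S, (∀ i, 0 ≤ c i t) ∧ Summable (fun i : ℕ => (1 + (i : ℝ)) * c i t)) ∧
  (∀ i, ContinuousOn (c i) S) ∧
  (∀ i : ℕ, ∀ t ∈ S,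
    (∀ᵐ s ∂(volume.restrict (Set.Ioc 0 t)), QSummable a (fun n => c n s) i) ∧
    IntegrableOn (fun s => Qi1 a (fun n => c n s) i) (Set.Ioc 0 t) ∧
    IntegrableOn (fun s => Qi2 a (fun n => c n s) i) (Set.Ioc 0 t) ∧
    IntegrableOn (fun s => Qi3 a (fun n => c n s) i) (Set.Ioc 0 t) ∧
    IntegrableOn (fun s => Qi4 a (fun n => c n s) i) (Set.Ioc 0 t) ∧
    c i t = c0 i + ∫ s in (0 : ℝ)..t,
      (Qi1 a (fun n => c n s) i + Qi2 a (fun n => c n s) i +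
        Qi3 a (fun n => c n s) i + Qi4 a (fun n => c n s) i))

/-- `c` is a mild solution of the non-isolated DGED system on the set `S` with
initial datum `c0 ∈ X_{0,1}^+`: the concentration of `0`-clusters is constant and the
components `c_i`, `i ≥ 1`, satisfy the integral equations. -/
def MildSolNon (a : ℕ → ℕ → ℕ → ℝ) (c0 : ℕ → ℝ) (S : Set ℝ) (c : ℕ → ℝ → ℝ) : Prop :=
  (∀ i, c i 0 = c0 i) ∧
  (∀ t ∈ S, (∀ i, 0 ≤ c i t) ∧ Summable (fun i : ℕ => (1 + (i : ℝ)) * c i t)) ∧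
  (∀ i, ContinuousOn (c i) S) ∧
  (∀ t ∈ S, c 0 t = c0 0) ∧
  (∀ i : ℕ, 1 ≤ i → ∀ t ∈ S,
    (∀ᵐ s ∂(volume.restrict (Set.Ioc 0 t)), QSummable a (fun n => c n s) i) ∧
    IntegrableOn (fun s => Qi1 a (fun n => c n s) i) (Set.Ioc 0 t) ∧
    IntegrableOn (fun s => Qi2 a (fun n => c n s) i) (Set.Ioc 0 t) ∧
    IntegrableOn (fun s => Qi3 a (fun n => c n s) i) (Set.Ioc 0 t) ∧
    IntegrableOn (fun s => Qi4 a (fun n => c n s) i) (Set.Ioc 0 t) ∧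
    c i t = c0 i + ∫ s in (0 : ℝ)..t,
      (Qi1 a (fun n => c n s) i + Qi2 a (fun n => c n s) i +
        Qi3 a (fun n => c n s) i + Qi4 a (fun n => c n s) i))

/-- Growth condition (GB) on the rate coefficients. -/
def GB (a : ℕ → ℕ → ℕ → ℝ) (C Q : ℝ) (q : ℕ → ℕ → ℝ) : Prop :=
  1 ≤ C ∧ 1 ≤ Q ∧ (∀ i k, 0 ≤ q i k) ∧
  (∀ i : ℕ, 1 ≤ i →
    ∑ k ∈ Finset.Icc 1 i, (k : ℝ) * ((i : ℝ) - k + 1) * q i k ≤ Q * i) ∧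
  (∀ i j k : ℕ, 1 ≤ k → k ≤ i → 1 ≤ j →
    a i j k ≤ C * ((i : ℝ) - k + 1) * ((j : ℝ) + k) * q i k)

set_option maxHeartbeats 1000000

open Filter Topology

section DGEDAux

variable {a : ℕ → ℕ → ℕ → ℝ} {C Q : ℝ} {q : ℕ → ℕ → ℝ}

private lemma abs_mul_sub_mul (x1 x2 y1 y2 : ℝ) (hx1 : 0 ≤ x1) (hy2 : 0 ≤ y2) :
    |x1 * x2 - y1 * y2| ≤ x1 * |x2 - y2| + |x1 - y1| * y2 := by
  have h : x1 * x2 - y1 * y2 = x1 * (x2 - y2) + (x1 - y1) * y2 := by ring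
  rw [h]
  refine (abs_add_le _ _).trans ?_
  rw [abs_mul, abs_mul, abs_of_nonneg hx1, abs_of_nonneg hy2]

private lemma abs_tsum_sub_tsum_le {ι : Type*} {f g b : ι → ℝ}
    (hf : Summable f) (hg : Summable g) (hb : Summable b)
    (h : ∀ p, |f p - g p| ≤ b p) :
    |(∑' p, f p) - ∑' p, g p| ≤ ∑' p, b p := by
  rw [← Summable.tsum_sub hf hg]
  have habs : Summable fun p => |f p - g p| :=
    Summable.of_nonneg_of_le (fun p => abs_nonneg _) h hb
  calc |∑' p, (f p - g p)| ≤ ∑' p, |f p - g p| := by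
        simpa [Real.norm_eq_abs] using
          norm_tsum_le_tsum_norm (f := fun p => f p - g p)
            (by simpa [Real.norm_eq_abs] using habs)
    _ ≤ ∑' p, b p := Summable.tsum_le_tsum h habs hb

private lemma tsum_sep {u v : ℕ → ℝ} (hu : Summable u) (hv : Summable v)
    (hu0 : ∀ k, 0 ≤ u k) (hv0 : ∀ j, 0 ≤ v j) :
    ∑' p : ℕ × ℕ, u p.1 * v p.2 = (∑' k, u k) * ∑' j, v j := by
  rw [Summable.tsum_prod' (hu.mul_of_nonneg hv hu0 hv0) (fun k => hv.mul_left (u k))]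
  simp only [tsum_mul_left]
  rw [tsum_mul_right]

private lemma summable_shift {x : ℕ → ℝ}
    (hs : Summable fun m : ℕ => (1 + (m : ℝ)) * x m) (i : ℕ) :
    Summable fun k : ℕ => (1 + ((i : ℝ) + k)) * x (i + k) := by
  have h := hs.comp_injective (add_right_injective i)
  refine h.congr fun k => ?_
  simp only [Function.comp]
  push_cast
  ring

private lemma tsum_shift_le {x : ℕ → ℝ} (hx : ∀ m, 0 ≤ x m)
    (hs : Summable fun m : ℕ => (1 + (m : ℝ)) * x m) (i : ℕ) :
    (∑' k : ℕ, (1 + ((i : ℝ) + k)) * x (i + k)) ≤ ∑' m : ℕ, (1 + (m : ℝ)) * x m :=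
  Summable.tsum_le_tsum_of_inj (fun k => i + k) (add_right_injective i)
    (fun c _ => mul_nonneg (by positivity) (hx c))
    (fun k => le_of_eq (by push_cast; ring)) (summable_shift hs i) hs

private lemma hd_summable {x y : ℕ → ℝ} (hx : ∀ m, 0 ≤ x m) (hy : ∀ m, 0 ≤ y m)
    (hxs : Summable fun m : ℕ => (1 + (m : ℝ)) * x m)
    (hys : Summable fun m : ℕ => (1 + (m : ℝ)) * y m) :
    Summable fun m : ℕ => (1 + (m : ℝ)) * |x m - y m| := by
  refine Summable.of_nonneg_of_le (fun m => by positivity) (fun m => ?_) (hxs.add hys)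
  have h1 : |x m - y m| ≤ x m + y m := by
    rcases le_total (x m) (y m) with h | h
    · rw [abs_of_nonpos (by linarith)]; linarith [hx m]
    · rw [abs_of_nonneg (by linarith)]; linarith [hy m]
  have h0 : (0:ℝ) ≤ 1 + (m:ℝ) := by positivity
  nlinarith [mul_le_mul_of_nonneg_left h1 h0]

private lemma single_le' (hq : ∀ i k, 0 ≤ q i k)
    (hqsum : ∀ i : ℕ, 1 ≤ i →
      ∑ k ∈ Finset.Icc 1 i, (k : ℝ) * ((i : ℝ) - k + 1) * q i k ≤ Q * i)
    {m k : ℕ} (hk1 : 1 ≤ k) (hkm : k ≤ m) :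
    (k : ℝ) * ((m : ℝ) - k + 1) * q m k ≤ Q * m := by
  refine le_trans ?_ (hqsum m (hk1.trans hkm))
  refine Finset.single_le_sum (f := fun j : ℕ => (j : ℝ) * ((m : ℝ) - j + 1) * q m j)
    ?_ (Finset.mem_Icc.mpr ⟨hk1, hkm⟩)
  intro j hj
  rcases Finset.mem_Icc.mp hj with ⟨_, hjm⟩
  have h : (j : ℝ) ≤ m := Nat.cast_le.mpr hjm
  have h0 : (0 : ℝ) ≤ (m : ℝ) - j + 1 := by linarith
  exact mul_nonneg (mul_nonneg (Nat.cast_nonneg j) h0) (hq m j)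

private lemma keyB1 (hC : 1 ≤ C) (hQ : 1 ≤ Q) (hq : ∀ i k, 0 ≤ q i k)
    (hqsum : ∀ i : ℕ, 1 ≤ i →
      ∑ k ∈ Finset.Icc 1 i, (k : ℝ) * ((i : ℝ) - k + 1) * q i k ≤ Q * i)
    (hbound : ∀ i j k : ℕ, 1 ≤ k → k ≤ i →
      a i j k ≤ C * ((i : ℝ) - k + 1) * ((j : ℝ) + k) * q i k)
    (i k j : ℕ) (hk : 1 ≤ k) :
    a (i + k) j k ≤ C * Q * ((1 + (i : ℝ) + k) * (1 + (j : ℝ))) := by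
  have hC0 : (0:ℝ) ≤ C := zero_le_one.trans hC
  have hQ0 : (0:ℝ) ≤ Q := zero_le_one.trans hQ
  have hk1 : (1:ℝ) ≤ (k:ℝ) := by exact_mod_cast hk
  have hj0 : (0:ℝ) ≤ (j:ℝ) := Nat.cast_nonneg j
  have hi0 : (0:ℝ) ≤ (i:ℝ) := Nat.cast_nonneg i
  have hq0 : (0:ℝ) ≤ q (i+k) k := hq (i+k) k
  have hb := hbound (i+k) j k hk (Nat.le_add_left k i)
  have hs := single_le' hq hqsum hk (Nat.le_add_left k i)
  push_cast at hb hs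
  have hs' : (k:ℝ) * ((i:ℝ)+1) * q (i+k) k ≤ Q * ((i:ℝ)+k) := by
    calc (k:ℝ) * ((i:ℝ)+1) * q (i+k) k = (k:ℝ) * (((i:ℝ)+k) - k + 1) * q (i+k) k := by ring
      _ ≤ Q * ((i:ℝ)+k) := hs
  have step1 : (j:ℝ) + k ≤ (1 + (j:ℝ)) * k := by nlinarith
  calc a (i+k) j k ≤ C * (((i:ℝ)+k) - k + 1) * ((j:ℝ) + k) * q (i+k) k := hb
    _ = (C * q (i+k) k * ((i:ℝ)+1)) * ((j:ℝ) + k) := by ring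
    _ ≤ (C * q (i+k) k * ((i:ℝ)+1)) * ((1 + (j:ℝ)) * k) := by
        refine mul_le_mul_of_nonneg_left step1 ?_
        exact mul_nonneg (mul_nonneg hC0 hq0) (by linarith)
    _ = (C * (1 + (j:ℝ))) * ((k:ℝ) * ((i:ℝ)+1) * q (i+k) k) := by ring
    _ ≤ (C * (1 + (j:ℝ))) * (Q * ((i:ℝ)+k)) := by
        refine mul_le_mul_of_nonneg_left hs' ?_
        exact mul_nonneg hC0 (by linarith)
    _ ≤ C * Q * ((1 + (i:ℝ) + k) * (1 + (j:ℝ))) := by nlinarith [mul_nonneg (mul_nonneg hC0 hQ0) hj0]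

private lemma keyB2 (hC : 1 ≤ C) (hq : ∀ i k, 0 ≤ q i k)
    (hbound : ∀ i j k : ℕ, 1 ≤ k → k ≤ i →
      a i j k ≤ C * ((i : ℝ) - k + 1) * ((j : ℝ) + k) * q i k)
    (i k j : ℕ) (hk : 1 ≤ k) (hkj : k ≤ j) :
    a j i k ≤ C * ((i : ℝ) + 1) * ((k : ℝ) * ((j : ℝ) - k + 1) * q j k) := by
  have hC0 : (0:ℝ) ≤ C := zero_le_one.trans hC
  have hk1 : (1:ℝ) ≤ (k:ℝ) := by exact_mod_cast hk
  have hkj' : (k:ℝ) ≤ (j:ℝ) := Nat.cast_le.mpr hkj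
  have hi0 : (0:ℝ) ≤ (i:ℝ) := Nat.cast_nonneg i
  have hq0 : (0:ℝ) ≤ q j k := hq j k
  have hik : (i:ℝ) + k ≤ ((i:ℝ) + 1) * k := by nlinarith
  calc a j i k ≤ C * ((j:ℝ) - k + 1) * ((i:ℝ) + k) * q j k := hbound j i k hk hkj
    _ = (C * ((j:ℝ) - k + 1) * q j k) * ((i:ℝ) + k) := by ring
    _ ≤ (C * ((j:ℝ) - k + 1) * q j k) * (((i:ℝ) + 1) * k) := by
        refine mul_le_mul_of_nonneg_left hik ?_
        exact mul_nonneg (mul_nonneg hC0 (by linarith)) hq0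
    _ = C * ((i:ℝ) + 1) * ((k:ℝ) * ((j:ℝ) - k + 1) * q j k) := by ring

private lemma keyB3 (hC : 1 ≤ C) (hQ : 1 ≤ Q) (hq : ∀ i k, 0 ≤ q i k)
    (hqsum : ∀ i : ℕ, 1 ≤ i →
      ∑ k ∈ Finset.Icc 1 i, (k : ℝ) * ((i : ℝ) - k + 1) * q i k ≤ Q * i)
    (hbound : ∀ i j k : ℕ, 1 ≤ k → k ≤ i →
      a i j k ≤ C * ((i : ℝ) - k + 1) * ((j : ℝ) + k) * q i k)
    (i k j : ℕ) (hk : 1 ≤ k) (hki : k ≤ i) (hkj : k ≤ j) :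
    a j (i - k) k ≤ C * Q * (i : ℝ) * (1 + (j : ℝ)) := by
  have hC0 : (0:ℝ) ≤ C := zero_le_one.trans hC
  have hQ0 : (0:ℝ) ≤ Q := zero_le_one.trans hQ
  have hk1 : (1:ℝ) ≤ (k:ℝ) := by exact_mod_cast hk
  have hkj' : (k:ℝ) ≤ (j:ℝ) := Nat.cast_le.mpr hkj
  have hj0 : (0:ℝ) ≤ (j:ℝ) := Nat.cast_nonneg j
  have hq0 : (0:ℝ) ≤ q j k := hq j k
  have hb := hbound j (i - k) k hk hkj
  rw [Nat.cast_sub hki] at hb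
  have hs := single_le' hq hqsum hk hkj
  have h2 : ((j:ℝ) - k + 1) * q j k ≤ Q * j := by
    have h1 : ((j:ℝ) - k + 1) * q j k ≤ (k:ℝ) * ((j:ℝ) - k + 1) * q j k := by
      nlinarith [mul_nonneg (show (0:ℝ) ≤ (j:ℝ) - k + 1 by linarith) hq0]
    linarith
  calc a j (i - k) k ≤ C * ((j:ℝ) - k + 1) * (((i:ℝ) - k) + k) * q j k := hb
    _ = (C * (i:ℝ)) * (((j:ℝ) - k + 1) * q j k) := by ring
    _ ≤ (C * (i:ℝ)) * (Q * (j:ℝ)) := by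
        refine mul_le_mul_of_nonneg_left h2 (mul_nonneg hC0 (Nat.cast_nonneg i))
    _ ≤ C * Q * (i : ℝ) * (1 + (j : ℝ)) := by
        nlinarith [mul_nonneg (mul_nonneg hC0 hQ0) (Nat.cast_nonneg i)]

private lemma keyB4 (hC : 1 ≤ C) (hQ : 1 ≤ Q) (hq : ∀ i k, 0 ≤ q i k)
    (hqsum : ∀ i : ℕ, 1 ≤ i →
      ∑ k ∈ Finset.Icc 1 i, (k : ℝ) * ((i : ℝ) - k + 1) * q i k ≤ Q * i)
    (hbound : ∀ i j k : ℕ, 1 ≤ k → k ≤ i →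
      a i j k ≤ C * ((i : ℝ) - k + 1) * ((j : ℝ) + k) * q i k)
    (i k j : ℕ) (hk : 1 ≤ k) (hki : k ≤ i) :
    a i j k ≤ C * Q * ((i : ℝ) * (i : ℝ)) * (1 + (j : ℝ)) := by
  have hC0 : (0:ℝ) ≤ C := zero_le_one.trans hC
  have hQ0 : (0:ℝ) ≤ Q := zero_le_one.trans hQ
  have hk1 : (1:ℝ) ≤ (k:ℝ) := by exact_mod_cast hk
  have hki' : (k:ℝ) ≤ (i:ℝ) := Nat.cast_le.mpr hki
  have hj0 : (0:ℝ) ≤ (j:ℝ) := Nat.cast_nonneg j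
  have hq0 : (0:ℝ) ≤ q i k := hq i k
  have hs := single_le' hq hqsum hk hki
  have h1 : (i:ℝ) - k + 1 ≤ (i:ℝ) := by linarith
  have h2 : (j:ℝ) + k ≤ (1 + (j:ℝ)) * k := by nlinarith
  have h3 : (k:ℝ) * q i k ≤ Q * i := by
    have : (k:ℝ) * q i k ≤ (k:ℝ) * ((i:ℝ) - k + 1) * q i k := by
      nlinarith [mul_nonneg (show (0:ℝ) ≤ (k:ℝ) by linarith) hq0]
    linarith
  calc a i j k ≤ C * ((i:ℝ) - k + 1) * ((j:ℝ) + k) * q i k := hbound i j k hk hki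
    _ = (C * q i k * ((j:ℝ) + k)) * ((i:ℝ) - k + 1) := by ring
    _ ≤ (C * q i k * ((j:ℝ) + k)) * (i:ℝ) := by
        refine mul_le_mul_of_nonneg_left h1 ?_
        exact mul_nonneg (mul_nonneg hC0 hq0) (by linarith)
    _ = (C * q i k * (i:ℝ)) * ((j:ℝ) + k) := by ring
    _ ≤ (C * q i k * (i:ℝ)) * ((1 + (j:ℝ)) * k) := by
        refine mul_le_mul_of_nonneg_left h2 ?_
        exact mul_nonneg (mul_nonneg hC0 hq0) (Nat.cast_nonneg i)
    _ = (C * (i:ℝ) * (1 + (j:ℝ))) * ((k:ℝ) * q i k) := by ring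
    _ ≤ (C * (i:ℝ) * (1 + (j:ℝ))) * (Q * (i:ℝ)) := by
        refine mul_le_mul_of_nonneg_left h3 ?_
        exact mul_nonneg (mul_nonneg hC0 (Nat.cast_nonneg i)) (by linarith)
    _ = C * Q * ((i : ℝ) * (i : ℝ)) * (1 + (j : ℝ)) := by ring

private lemma Q1_diff
    (ha : ∀ i j k, 0 ≤ a i j k) (hC : 1 ≤ C) (hQ : 1 ≤ Q)
    (key : ∀ i k j : ℕ, 1 ≤ k → a (i + k) j k ≤ C * Q * ((1 + (i : ℝ) + k) * (1 + (j : ℝ))))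
    (i : ℕ) (x y : ℕ → ℝ) (hx : ∀ m, 0 ≤ x m) (hy : ∀ m, 0 ≤ y m)
    (hxs : Summable fun m : ℕ => (1 + (m : ℝ)) * x m)
    (hys : Summable fun m : ℕ => (1 + (m : ℝ)) * y m) :
    |Qi1 a x i - Qi1 a y i| ≤ C * Q *
      ((((∑' m : ℕ, (1 + (m : ℝ)) * x m) + ∑' m : ℕ, (1 + (m : ℝ)) * y m)) *
        ∑' m : ℕ, (1 + (m : ℝ)) * |x m - y m|) := by
  have hC0 : (0:ℝ) ≤ C := zero_le_one.trans hC
  have hQ0 : (0:ℝ) ≤ Q := zero_le_one.trans hQ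
  have hCQ : (0:ℝ) ≤ C * Q := mul_nonneg hC0 hQ0
  have hd := hd_summable hx hy hxs hys
  set Nx := ∑' m : ℕ, (1 + (m : ℝ)) * x m with hNx
  set Ny := ∑' m : ℕ, (1 + (m : ℝ)) * y m with hNy
  set D := ∑' m : ℕ, (1 + (m : ℝ)) * |x m - y m| with hDd
  -- four one-variable sequences
  set u1 : ℕ → ℝ := fun k => C * Q * ((1 + (i:ℝ) + k) * x (i + k)) with hu1def
  set v1 : ℕ → ℝ := fun j => (1 + (j:ℝ)) * |x j - y j| with hv1def
  set u2 : ℕ → ℝ := fun k => C * Q * ((1 + (i:ℝ) + k) * |x (i + k) - y (i + k)|) with hu2def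
  set v2 : ℕ → ℝ := fun j => (1 + (j:ℝ)) * y j with hv2def
  have hu1s : Summable u1 := by
    refine ((summable_shift hxs i).mul_left (C * Q)).congr fun k => ?_
    simp only [hu1def]; ring
  have hv1s : Summable v1 := hd
  have hu2s : Summable u2 := by
    refine ((summable_shift hd i).mul_left (C * Q)).congr fun k => ?_
    simp only [hu2def]; ring
  have hv2s : Summable v2 := hys
  have hu10 : ∀ k, 0 ≤ u1 k := fun k => by
    simp only [hu1def]; have := hx (i + k); positivity
  have hv10 : ∀ j, 0 ≤ v1 j := fun j => by simp only [hv1def]; positivity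
  have hu20 : ∀ k, 0 ≤ u2 k := fun k => by simp only [hu2def]; positivity
  have hv20 : ∀ j, 0 ≤ v2 j := fun j => by
    simp only [hv2def]; have := hy j; positivity
  have hu1sum : (∑' k, u1 k) ≤ C * Q * Nx := by
    have h1 : (∑' k, u1 k) = C * Q * ∑' k : ℕ, (1 + ((i:ℝ) + k)) * x (i + k) := by
      rw [← tsum_mul_left]
      exact tsum_congr fun k => by simp only [hu1def]; ring
    rw [h1]
    exact mul_le_mul_of_nonneg_left (tsum_shift_le hx hxs i) hCQ
  have hu2sum : (∑' k, u2 k) ≤ C * Q * D := by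
    have h1 : (∑' k, u2 k) = C * Q * ∑' k : ℕ, (1 + ((i:ℝ) + k)) * |x (i + k) - y (i + k)| := by
      rw [← tsum_mul_left]
      exact tsum_congr fun k => by simp only [hu2def]; ring
    rw [h1]
    exact mul_le_mul_of_nonneg_left (tsum_shift_le (fun m => abs_nonneg _) hd i) hCQ
  -- the two ℕ×ℕ functions
  set fx : ℕ × ℕ → ℝ := fun p =>
    if 1 ≤ p.1 then a (i + p.1) p.2 p.1 * x (i + p.1) * x p.2 else 0 with hfxdef
  set fy : ℕ × ℕ → ℝ := fun p =>
    if 1 ≤ p.1 then a (i + p.1) p.2 p.1 * y (i + p.1) * y p.2 else 0 with hfydef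
  set b : ℕ × ℕ → ℝ := fun p => u1 p.1 * v1 p.2 + u2 p.1 * v2 p.2 with hbdef
  have hbs1 : Summable fun p : ℕ × ℕ => u1 p.1 * v1 p.2 := hu1s.mul_of_nonneg hv1s hu10 hv10
  have hbs2 : Summable fun p : ℕ × ℕ => u2 p.1 * v2 p.2 := hu2s.mul_of_nonneg hv2s hu20 hv20
  have hbs : Summable b := hbs1.add hbs2
  have hfx_le : ∀ p : ℕ × ℕ, fx p ≤ (C * Q * ((1 + (i:ℝ) + p.1) * x (i + p.1))) * ((1 + (p.2:ℝ)) * x p.2) := by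
    rintro ⟨k, j⟩
    simp only [hfxdef]
    split
    · next h =>
      have hkey := key i k j h
      have h1 : a (i + k) j k * x (i + k) * x j ≤
          (C * Q * ((1 + (i:ℝ) + k) * (1 + (j:ℝ)))) * (x (i + k) * x j) := by
        have := mul_nonneg (hx (i + k)) (hx j)
        nlinarith [mul_le_mul_of_nonneg_right hkey this]
      calc a (i + k) j k * x (i + k) * x j ≤
            (C * Q * ((1 + (i:ℝ) + k) * (1 + (j:ℝ)))) * (x (i + k) * x j) := h1
        _ = (C * Q * ((1 + (i:ℝ) + k) * x (i + k))) * ((1 + (j:ℝ)) * x j) := by ring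
    · next h =>
      have h1 := hx (i + k); have h2 := hx j
      positivity
  have hfy_le : ∀ p : ℕ × ℕ, fy p ≤ (C * Q * ((1 + (i:ℝ) + p.1) * y (i + p.1))) * ((1 + (p.2:ℝ)) * y p.2) := by
    rintro ⟨k, j⟩
    simp only [hfydef]
    split
    · next h =>
      have hkey := key i k j h
      have h1 : a (i + k) j k * y (i + k) * y j ≤
          (C * Q * ((1 + (i:ℝ) + k) * (1 + (j:ℝ)))) * (y (i + k) * y j) := by
        have := mul_nonneg (hy (i + k)) (hy j)
        nlinarith [mul_le_mul_of_nonneg_right hkey this]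
      calc a (i + k) j k * y (i + k) * y j ≤
            (C * Q * ((1 + (i:ℝ) + k) * (1 + (j:ℝ)))) * (y (i + k) * y j) := h1
        _ = (C * Q * ((1 + (i:ℝ) + k) * y (i + k))) * ((1 + (j:ℝ)) * y j) := by ring
    · next h =>
      have h1 := hy (i + k); have h2 := hy j
      positivity
  have hfx0 : ∀ p, 0 ≤ fx p := by
    rintro ⟨k, j⟩; simp only [hfxdef]; split
    · exact mul_nonneg (mul_nonneg (ha _ _ _) (hx _)) (hx _)
    · exact le_rfl
  have hfy0 : ∀ p, 0 ≤ fy p := by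
    rintro ⟨k, j⟩; simp only [hfydef]; split
    · exact mul_nonneg (mul_nonneg (ha _ _ _) (hy _)) (hy _)
    · exact le_rfl
  have hfxs : Summable fx := by
    refine Summable.of_nonneg_of_le hfx0 hfx_le
      (Summable.mul_of_nonneg (f := fun k : ℕ => C * Q * ((1 + (i:ℝ) + k) * x (i + k)))
        (g := fun j : ℕ => (1 + (j:ℝ)) * x j) ?_ hxs ?_ ?_)
    · refine ((summable_shift hxs i).mul_left (C * Q)).congr fun k => by ring
    · intro k; have := hx (i + k); positivity
    · intro j; have := hx j; positivity
  have hfys : Summable fy := by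
    refine Summable.of_nonneg_of_le hfy0 hfy_le
      (Summable.mul_of_nonneg (f := fun k : ℕ => C * Q * ((1 + (i:ℝ) + k) * y (i + k)))
        (g := fun j : ℕ => (1 + (j:ℝ)) * y j) ?_ hys ?_ ?_)
    · refine ((summable_shift hys i).mul_left (C * Q)).congr fun k => by ring
    · intro k; have := hy (i + k); positivity
    · intro j; have := hy j; positivity
  have habs : ∀ p : ℕ × ℕ, |fx p - fy p| ≤ b p := by
    rintro ⟨k, j⟩
    simp only [hfxdef, hfydef, hbdef]
    split
    · next h =>
      have hkey := key i k j h
      have ha0 := ha (i + k) j k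
      have hprod := abs_mul_sub_mul (x (i + k)) (x j) (y (i + k)) (y j) (hx _) (hy _)
      calc |a (i + k) j k * x (i + k) * x j - a (i + k) j k * y (i + k) * y j|
          = a (i + k) j k * |x (i + k) * x j - y (i + k) * y j| := by
            rw [show a (i + k) j k * x (i + k) * x j - a (i + k) j k * y (i + k) * y j
                = a (i + k) j k * (x (i + k) * x j - y (i + k) * y j) by ring,
              abs_mul, abs_of_nonneg ha0]
        _ ≤ (C * Q * ((1 + (i:ℝ) + k) * (1 + (j:ℝ)))) *
              (x (i + k) * |x j - y j| + |x (i + k) - y (i + k)| * y j) := by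
            have hB0 : (0:ℝ) ≤ C * Q * ((1 + (i:ℝ) + k) * (1 + (j:ℝ))) := by positivity
            have h2 : a (i + k) j k * |x (i + k) * x j - y (i + k) * y j| ≤
                (C * Q * ((1 + (i:ℝ) + k) * (1 + (j:ℝ)))) * |x (i + k) * x j - y (i + k) * y j| :=
              mul_le_mul_of_nonneg_right hkey (abs_nonneg _)
            refine h2.trans (mul_le_mul_of_nonneg_left hprod hB0)
        _ = u1 k * v1 j + u2 k * v2 j := by
            simp only [hu1def, hv1def, hu2def, hv2def]; ring
    · next h =>
      simp only [sub_zero, abs_zero]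
      exact add_nonneg (mul_nonneg (hu10 k) (hv10 j)) (mul_nonneg (hu20 k) (hv20 j))
  have hmain := abs_tsum_sub_tsum_le hfxs hfys hbs habs
  have hDb : (∑' p : ℕ × ℕ, b p) ≤ C * Q * ((Nx + Ny) * D) := by
    have h1 : (∑' p : ℕ × ℕ, b p)
        = (∑' k, u1 k) * (∑' j, v1 j) + (∑' k, u2 k) * (∑' j, v2 j) := by
      rw [hbdef, Summable.tsum_add hbs1 hbs2, tsum_sep hu1s hv1s hu10 hv10, tsum_sep hu2s hv2s hu20 hv20]
    rw [h1]
    have hv1eq : (∑' j, v1 j) = D := rfl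
    have hv2eq : (∑' j, v2 j) = Ny := rfl
    rw [hv1eq, hv2eq]
    have hD0 : 0 ≤ D := tsum_nonneg fun m => by positivity
    have hNy0 : 0 ≤ Ny := tsum_nonneg fun m => by have := hy m; positivity
    have h2 : (∑' k, u1 k) * D ≤ (C * Q * Nx) * D := mul_le_mul_of_nonneg_right hu1sum hD0
    have h3 : (∑' k, u2 k) * Ny ≤ (C * Q * D) * Ny := mul_le_mul_of_nonneg_right hu2sum hNy0
    nlinarith [h2, h3]
  calc |Qi1 a x i - Qi1 a y i| = |(∑' p, fx p) - ∑' p, fy p| := rfl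
    _ ≤ ∑' p, b p := hmain
    _ ≤ C * Q * ((Nx + Ny) * D) := hDb

noncomputable def wfun (q : ℕ → ℕ → ℝ) : ℕ × ℕ → ℝ :=
  fun p => if 1 ≤ p.1 ∧ p.1 ≤ p.2 then (p.1 : ℝ) * ((p.2 : ℝ) - p.1 + 1) * q p.2 p.1 else 0

private lemma wfun_nonneg (hq : ∀ i k, 0 ≤ q i k) : ∀ p, 0 ≤ wfun q p := by
  rintro ⟨k, j⟩
  unfold wfun
  split
  · next h =>
    have hkj : (k : ℝ) ≤ j := Nat.cast_le.mpr h.2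
    have h0 : (0:ℝ) ≤ (j:ℝ) - k + 1 := by linarith
    exact mul_nonneg (mul_nonneg (Nat.cast_nonneg k) h0) (hq j k)
  · exact le_rfl

private lemma wfun_mul (hQ : 1 ≤ Q) (hq : ∀ i k, 0 ≤ q i k)
    (hqsum : ∀ i : ℕ, 1 ≤ i →
      ∑ k ∈ Finset.Icc 1 i, (k : ℝ) * ((i : ℝ) - k + 1) * q i k ≤ Q * i)
    (z : ℕ → ℝ) (hz : ∀ m, 0 ≤ z m)
    (hzs : Summable fun m : ℕ => (1 + (m : ℝ)) * z m) :
    Summable (fun p : ℕ × ℕ => wfun q p * z p.2) ∧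
      (∑' p : ℕ × ℕ, wfun q p * z p.2) ≤ Q * ∑' m : ℕ, (1 + (m : ℝ)) * z m := by
  classical
  have hQ0 : (0:ℝ) ≤ Q := zero_le_one.trans hQ
  set F : ℕ × ℕ → ℝ := fun r => wfun q (r.2, r.1) * z r.1 with hFdef
  have hF0 : ∀ r, 0 ≤ F r := fun r => mul_nonneg (wfun_nonneg hq _) (hz _)
  have hfib0 : ∀ j : ℕ, ∀ k ∉ Finset.Icc 1 j, F (j, k) = 0 := by
    intro j k hk
    have h : ¬(1 ≤ k ∧ k ≤ j) := by simpa [Finset.mem_Icc] using hk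
    simp [hFdef, wfun, h]
  have hfib : ∀ j : ℕ, Summable fun k => F (j, k) :=
    fun j => summable_of_ne_finset_zero (hfib0 j)
  have hfib_eq : ∀ j : ℕ, (∑' k, F (j, k)) =
      (∑ k ∈ Finset.Icc 1 j, (k : ℝ) * ((j : ℝ) - k + 1) * q j k) * z j := by
    intro j
    rw [tsum_eq_sum (hfib0 j), Finset.sum_mul]
    refine Finset.sum_congr rfl fun k hk => ?_
    rcases Finset.mem_Icc.mp hk with ⟨h1, h2⟩
    simp [hFdef, wfun, h1, h2]
  have hfib_le : ∀ j : ℕ, (∑' k, F (j, k)) ≤ Q * ((1 + (j : ℝ)) * z j) := by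
    intro j
    rw [hfib_eq j]
    rcases Nat.eq_zero_or_pos j with rfl | hj
    · simp only [Finset.Icc_self, show Finset.Icc 1 0 = ∅ from rfl, Finset.sum_empty, zero_mul]
      have := hz 0; positivity
    · have h1 := hqsum j hj
      have h2 : (∑ k ∈ Finset.Icc 1 j, (k : ℝ) * ((j : ℝ) - k + 1) * q j k) * z j
          ≤ (Q * j) * z j := mul_le_mul_of_nonneg_right h1 (hz j)
      have h3 : (Q * (j:ℝ)) * z j ≤ Q * ((1 + (j:ℝ)) * z j) := by
        nlinarith [mul_nonneg hQ0 (hz j)]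
      linarith
  have hsums : Summable fun j : ℕ => ∑' k, F (j, k) :=
    Summable.of_nonneg_of_le (fun j => tsum_nonneg fun k => hF0 _) hfib_le (hzs.mul_left Q)
  have hFsum : Summable F := (summable_prod_of_nonneg hF0).2 ⟨hfib, hsums⟩
  have hcomp : (fun p : ℕ × ℕ => wfun q p * z p.2) = F ∘ (Equiv.prodComm ℕ ℕ) := rfl
  constructor
  · rw [hcomp]; exact hFsum.comp_injective (Equiv.prodComm ℕ ℕ).injective
  · have h1 : (∑' p : ℕ × ℕ, wfun q p * z p.2) = ∑' r, F r := by
      rw [hcomp]; exact (Equiv.prodComm ℕ ℕ).tsum_eq F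
    rw [h1, Summable.tsum_prod' hFsum hfib]
    calc (∑' j : ℕ, ∑' k : ℕ, F (j, k)) ≤ ∑' j : ℕ, Q * ((1 + (j:ℝ)) * z j) :=
          Summable.tsum_le_tsum hfib_le hsums (hzs.mul_left Q)
      _ = Q * ∑' m : ℕ, (1 + (m:ℝ)) * z m := tsum_mul_left

private lemma Q2_diff
    (ha : ∀ i j k, 0 ≤ a i j k) (hC : 1 ≤ C) (hQ : 1 ≤ Q) (hq : ∀ i k, 0 ≤ q i k)
    (hqsum : ∀ i : ℕ, 1 ≤ i →
      ∑ k ∈ Finset.Icc 1 i, (k : ℝ) * ((i : ℝ) - k + 1) * q i k ≤ Q * i)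
    (key : ∀ i k j : ℕ, 1 ≤ k → k ≤ j →
      a j i k ≤ C * ((i : ℝ) + 1) * ((k : ℝ) * ((j : ℝ) - k + 1) * q j k))
    (i : ℕ) (x y : ℕ → ℝ) (hx : ∀ m, 0 ≤ x m) (hy : ∀ m, 0 ≤ y m)
    (hxs : Summable fun m : ℕ => (1 + (m : ℝ)) * x m)
    (hys : Summable fun m : ℕ => (1 + (m : ℝ)) * y m)
    (hd : Summable fun m : ℕ => (1 + (m : ℝ)) * |x m - y m|) :
    |Qi2 a x i - Qi2 a y i| ≤ C * Q * ((i : ℝ) + 1) *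
      ((((∑' m : ℕ, (1 + (m : ℝ)) * x m) + ∑' m : ℕ, (1 + (m : ℝ)) * y m)) *
        ∑' m : ℕ, (1 + (m : ℝ)) * |x m - y m|) := by
  have hC0 : (0:ℝ) ≤ C := zero_le_one.trans hC
  have hQ0 : (0:ℝ) ≤ Q := zero_le_one.trans hQ
  set Nx := ∑' m : ℕ, (1 + (m : ℝ)) * x m with hNx
  set Ny := ∑' m : ℕ, (1 + (m : ℝ)) * y m with hNy
  set D := ∑' m : ℕ, (1 + (m : ℝ)) * |x m - y m| with hDd
  have hD0 : 0 ≤ D := tsum_nonneg fun m => by positivity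
  have hNx0 : 0 ≤ Nx := tsum_nonneg fun m => by have := hx m; positivity
  have hNy0 : 0 ≤ Ny := tsum_nonneg fun m => by have := hy m; positivity
  have hWx := wfun_mul hQ hq hqsum x hx hxs
  have hWd := wfun_mul hQ hq hqsum (fun m => |x m - y m|) (fun m => abs_nonneg _) hd
  -- individual bounds
  have hyiNy : y i ≤ Ny := by
    have h1 : y i ≤ (1 + (i:ℝ)) * y i := by nlinarith [hy i, Nat.cast_nonneg (α := ℝ) i]
    refine h1.trans (Summable.le_tsum hys i fun m _ => ?_)
    have := hy m; positivity
  have hDiD : |x i - y i| ≤ D := by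
    have h1 : |x i - y i| ≤ (1 + (i:ℝ)) * |x i - y i| := by
      nlinarith [abs_nonneg (x i - y i), Nat.cast_nonneg (α := ℝ) i]
    refine h1.trans (Summable.le_tsum hd i fun m _ => ?_)
    positivity
  set fx : ℕ × ℕ → ℝ := fun p =>
    if 1 ≤ p.1 ∧ p.1 ≤ p.2 then a p.2 i p.1 * x p.2 * x i else 0 with hfxdef
  set fy : ℕ × ℕ → ℝ := fun p =>
    if 1 ≤ p.1 ∧ p.1 ≤ p.2 then a p.2 i p.1 * y p.2 * y i else 0 with hfydef
  set b : ℕ × ℕ → ℝ := fun p =>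
    (C * ((i:ℝ) + 1) * |x i - y i|) * (wfun q p * x p.2) +
      (C * ((i:ℝ) + 1) * y i) * (wfun q p * |x p.2 - y p.2|) with hbdef
  have hbs1 : Summable fun p : ℕ × ℕ => (C * ((i:ℝ) + 1) * |x i - y i|) * (wfun q p * x p.2) :=
    hWx.1.mul_left _
  have hbs2 : Summable fun p : ℕ × ℕ => (C * ((i:ℝ) + 1) * y i) * (wfun q p * |x p.2 - y p.2|) :=
    hWd.1.mul_left _
  have hbs : Summable b := hbs1.add hbs2
  have hfx0 : ∀ p, 0 ≤ fx p := by
    rintro ⟨k, j⟩; simp only [hfxdef]; split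
    · exact mul_nonneg (mul_nonneg (ha _ _ _) (hx _)) (hx _)
    · exact le_rfl
  have hfy0 : ∀ p, 0 ≤ fy p := by
    rintro ⟨k, j⟩; simp only [hfydef]; split
    · exact mul_nonneg (mul_nonneg (ha _ _ _) (hy _)) (hy _)
    · exact le_rfl
  have hfx_le : ∀ p : ℕ × ℕ, fx p ≤ (C * ((i:ℝ) + 1) * x i) * (wfun q p * x p.2) := by
    rintro ⟨k, j⟩
    simp only [hfxdef]
    by_cases h : 1 ≤ k ∧ k ≤ j
    · rw [if_pos h]
      have hkey := key i k j h.1 h.2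
      have hw : wfun q (k, j) = (k : ℝ) * ((j : ℝ) - k + 1) * q j k := by
        simp [wfun, h.1, h.2]
      rw [hw]
      have hprod := mul_nonneg (hx j) (hx i)
      nlinarith [mul_le_mul_of_nonneg_right hkey hprod]
    · rw [if_neg h]
      have h1 := hx j; have h2 := hx i
      have h3 := wfun_nonneg hq (k, j)
      have : (0:ℝ) ≤ (i:ℝ) + 1 := by positivity
      positivity
  have hfy_le : ∀ p : ℕ × ℕ, fy p ≤ (C * ((i:ℝ) + 1) * y i) * (wfun q p * y p.2) := by
    rintro ⟨k, j⟩
    simp only [hfydef]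
    by_cases h : 1 ≤ k ∧ k ≤ j
    · rw [if_pos h]
      have hkey := key i k j h.1 h.2
      have hw : wfun q (k, j) = (k : ℝ) * ((j : ℝ) - k + 1) * q j k := by
        simp [wfun, h.1, h.2]
      rw [hw]
      have hprod := mul_nonneg (hy j) (hy i)
      nlinarith [mul_le_mul_of_nonneg_right hkey hprod]
    · rw [if_neg h]
      have h1 := hy j; have h2 := hy i
      have h3 := wfun_nonneg hq (k, j)
      positivity
  have hWy := wfun_mul hQ hq hqsum y hy hys
  have hfxs : Summable fx :=
    Summable.of_nonneg_of_le hfx0 hfx_le (hWx.1.mul_left _)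
  have hfys : Summable fy :=
    Summable.of_nonneg_of_le hfy0 hfy_le (hWy.1.mul_left _)
  have habs : ∀ p : ℕ × ℕ, |fx p - fy p| ≤ b p := by
    rintro ⟨k, j⟩
    simp only [hfxdef, hfydef, hbdef]
    by_cases h : 1 ≤ k ∧ k ≤ j
    · rw [if_pos h, if_pos h]
      have hkey := key i k j h.1 h.2
      have ha0 := ha j i k
      have hw : wfun q (k, j) = (k : ℝ) * ((j : ℝ) - k + 1) * q j k := by
        simp [wfun, h.1, h.2]
      have hw0 : 0 ≤ (k : ℝ) * ((j : ℝ) - k + 1) * q j k := hw ▸ wfun_nonneg hq (k, j)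
      have hprod := abs_mul_sub_mul (x j) (x i) (y j) (y i) (hx _) (hy _)
      have hBig : (0:ℝ) ≤ C * ((i:ℝ) + 1) := by positivity
      calc |a j i k * x j * x i - a j i k * y j * y i|
          = a j i k * |x j * x i - y j * y i| := by
            rw [show a j i k * x j * x i - a j i k * y j * y i
                = a j i k * (x j * x i - y j * y i) by ring, abs_mul, abs_of_nonneg ha0]
        _ ≤ (C * ((i:ℝ) + 1) * ((k : ℝ) * ((j : ℝ) - k + 1) * q j k)) *
              (x j * |x i - y i| + |x j - y j| * y i) := by
            have h2 := mul_le_mul_of_nonneg_right hkey (abs_nonneg (x j * x i - y j * y i))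
            have h3 := mul_le_mul_of_nonneg_left hprod
              (mul_nonneg hBig hw0)
            calc a j i k * |x j * x i - y j * y i|
                ≤ (C * ((i:ℝ) + 1) * ((k : ℝ) * ((j : ℝ) - k + 1) * q j k)) *
                  |x j * x i - y j * y i| := h2
              _ ≤ _ := by
                  refine mul_le_mul_of_nonneg_left hprod (mul_nonneg hBig hw0)
        _ = (C * ((i:ℝ) + 1) * |x i - y i|) * (wfun q (k, j) * x j) +
              (C * ((i:ℝ) + 1) * y i) * (wfun q (k, j) * |x j - y j|) := by
            rw [hw]; ring
    · rw [if_neg h, if_neg h]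
      simp only [sub_zero, abs_zero]
      have h3 := wfun_nonneg hq (k, j)
      have h4 := hx j; have h5 := hy i
      positivity
  have hmain := abs_tsum_sub_tsum_le hfxs hfys hbs habs
  have hDb : (∑' p : ℕ × ℕ, b p) ≤ C * Q * ((i:ℝ) + 1) * ((Nx + Ny) * D) := by
    have h1 : (∑' p : ℕ × ℕ, b p) =
        (C * ((i:ℝ) + 1) * |x i - y i|) * (∑' p : ℕ × ℕ, wfun q p * x p.2) +
        (C * ((i:ℝ) + 1) * y i) * (∑' p : ℕ × ℕ, wfun q p * |x p.2 - y p.2|) := by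
      rw [hbdef, Summable.tsum_add hbs1 hbs2, tsum_mul_left, tsum_mul_left]
    rw [h1]
    have hS1 : (0:ℝ) ≤ ∑' p : ℕ × ℕ, wfun q p * x p.2 :=
      tsum_nonneg fun p => mul_nonneg (wfun_nonneg hq p) (hx _)
    have hS2 : (0:ℝ) ≤ ∑' p : ℕ × ℕ, wfun q p * |x p.2 - y p.2| :=
      tsum_nonneg fun p => mul_nonneg (wfun_nonneg hq p) (abs_nonneg _)
    have hA1 : (0:ℝ) ≤ C * ((i:ℝ) + 1) * |x i - y i| := by positivity
    have hA2 : (0:ℝ) ≤ C * ((i:ℝ) + 1) * y i := by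
      have := hy i; positivity
    have hB1 : (C * ((i:ℝ) + 1) * |x i - y i|) * (∑' p : ℕ × ℕ, wfun q p * x p.2)
        ≤ (C * ((i:ℝ) + 1) * D) * (Q * Nx) := by
      refine mul_le_mul ?_ hWx.2 hS1 ?_
      · refine mul_le_mul_of_nonneg_left hDiD (by positivity)
      · positivity
    have hB2 : (C * ((i:ℝ) + 1) * y i) * (∑' p : ℕ × ℕ, wfun q p * |x p.2 - y p.2|)
        ≤ (C * ((i:ℝ) + 1) * Ny) * (Q * D) := by
      refine mul_le_mul ?_ hWd.2 hS2 ?_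
      · refine mul_le_mul_of_nonneg_left hyiNy (by positivity)
      · positivity
    nlinarith [hB1, hB2]
  have hQi : Qi2 a x i - Qi2 a y i = (∑' p, fy p) - ∑' p, fx p := by
    simp only [Qi2, hfxdef, hfydef]; ring
  rw [hQi, abs_sub_comm]
  exact hmain.trans hDb

private lemma gen_inner_diff
    (B : ℝ) (hB : 0 ≤ B) (A : ℕ → ℝ) (hA0 : ∀ j, 0 ≤ A j)
    (P : ℕ → Prop) [DecidablePred P]
    (hAB : ∀ j, P j → A j ≤ B * (1 + (j:ℝ)))
    (x y : ℕ → ℝ) (x0 y0 : ℝ) (hx : ∀ m, 0 ≤ x m) (hy : ∀ m, 0 ≤ y m)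
    (hx0 : 0 ≤ x0) (hy0 : 0 ≤ y0)
    (hxs : Summable fun m : ℕ => (1 + (m : ℝ)) * x m)
    (hys : Summable fun m : ℕ => (1 + (m : ℝ)) * y m)
    (hd : Summable fun m : ℕ => (1 + (m : ℝ)) * |x m - y m|)
    (hdx0 : |x0 - y0| ≤ ∑' m : ℕ, (1 + (m : ℝ)) * |x m - y m|)
    (hy0N : y0 ≤ ∑' m : ℕ, (1 + (m : ℝ)) * y m) :
    |(∑' j : ℕ, if P j then A j * x j * x0 else 0) -
      ∑' j : ℕ, if P j then A j * y j * y0 else 0| ≤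
      B * ((((∑' m : ℕ, (1 + (m : ℝ)) * x m) + ∑' m : ℕ, (1 + (m : ℝ)) * y m)) *
        ∑' m : ℕ, (1 + (m : ℝ)) * |x m - y m|) := by
  set Nx := ∑' m : ℕ, (1 + (m : ℝ)) * x m with hNx
  set Ny := ∑' m : ℕ, (1 + (m : ℝ)) * y m with hNy
  set D := ∑' m : ℕ, (1 + (m : ℝ)) * |x m - y m| with hDd
  have hD0 : 0 ≤ D := tsum_nonneg fun m => by positivity
  have hNx0 : 0 ≤ Nx := tsum_nonneg fun m => by have := hx m; positivity
  have hNy0 : 0 ≤ Ny := tsum_nonneg fun m => by have := hy m; positivity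
  set fx : ℕ → ℝ := fun j => if P j then A j * x j * x0 else 0 with hfxdef
  set fy : ℕ → ℝ := fun j => if P j then A j * y j * y0 else 0 with hfydef
  set b : ℕ → ℝ := fun j =>
    (B * |x0 - y0|) * ((1 + (j:ℝ)) * x j) + (B * y0) * ((1 + (j:ℝ)) * |x j - y j|) with hbdef
  have hbs1 : Summable fun j : ℕ => (B * |x0 - y0|) * ((1 + (j:ℝ)) * x j) := hxs.mul_left _
  have hbs2 : Summable fun j : ℕ => (B * y0) * ((1 + (j:ℝ)) * |x j - y j|) := hd.mul_left _
  have hbs : Summable b := hbs1.add hbs2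
  have hfx0 : ∀ j, 0 ≤ fx j := by
    intro j; simp only [hfxdef]; split
    · exact mul_nonneg (mul_nonneg (hA0 _) (hx _)) hx0
    · exact le_rfl
  have hfy0 : ∀ j, 0 ≤ fy j := by
    intro j; simp only [hfydef]; split
    · exact mul_nonneg (mul_nonneg (hA0 _) (hy _)) hy0
    · exact le_rfl
  have hfx_le : ∀ j : ℕ, fx j ≤ (B * x0) * ((1 + (j:ℝ)) * x j) := by
    intro j; simp only [hfxdef]
    by_cases h : P j
    · rw [if_pos h]
      have hkey := hAB j h
      nlinarith [mul_le_mul_of_nonneg_right hkey (mul_nonneg (hx j) hx0),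
        mul_nonneg (hx j) hx0]
    · rw [if_neg h]
      have := hx j; positivity
  have hfy_le : ∀ j : ℕ, fy j ≤ (B * y0) * ((1 + (j:ℝ)) * y j) := by
    intro j; simp only [hfydef]
    by_cases h : P j
    · rw [if_pos h]
      have hkey := hAB j h
      nlinarith [mul_le_mul_of_nonneg_right hkey (mul_nonneg (hy j) hy0),
        mul_nonneg (hy j) hy0]
    · rw [if_neg h]
      have := hy j; positivity
  have hfxs : Summable fx := Summable.of_nonneg_of_le hfx0 hfx_le (hxs.mul_left _)
  have hfys : Summable fy := Summable.of_nonneg_of_le hfy0 hfy_le (hys.mul_left _)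
  have habs : ∀ j : ℕ, |fx j - fy j| ≤ b j := by
    intro j
    simp only [hfxdef, hfydef, hbdef]
    by_cases h : P j
    · rw [if_pos h, if_pos h]
      have hkey := hAB j h
      have hprod := abs_mul_sub_mul (x j) x0 (y j) y0 (hx _) hy0
      calc |A j * x j * x0 - A j * y j * y0| = A j * |x j * x0 - y j * y0| := by
            rw [show A j * x j * x0 - A j * y j * y0 = A j * (x j * x0 - y j * y0) by ring,
              abs_mul, abs_of_nonneg (hA0 j)]
        _ ≤ (B * (1 + (j:ℝ))) * (x j * |x0 - y0| + |x j - y j| * y0) := by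
            calc A j * |x j * x0 - y j * y0| ≤ (B * (1 + (j:ℝ))) * |x j * x0 - y j * y0| :=
                  mul_le_mul_of_nonneg_right hkey (abs_nonneg _)
              _ ≤ _ := mul_le_mul_of_nonneg_left hprod (by positivity)
        _ = (B * |x0 - y0|) * ((1 + (j:ℝ)) * x j) + (B * y0) * ((1 + (j:ℝ)) * |x j - y j|) := by
            ring
    · rw [if_neg h, if_neg h]
      simp only [sub_zero, abs_zero]
      have h1 := hx j
      positivity
  have hmain := abs_tsum_sub_tsum_le hfxs hfys hbs habs
  refine hmain.trans ?_
  have h1 : (∑' j, b j) = (B * |x0 - y0|) * Nx + (B * y0) * D := by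
    rw [hbdef, Summable.tsum_add hbs1 hbs2, tsum_mul_left, tsum_mul_left]
  rw [h1]
  have hB1 : (B * |x0 - y0|) * Nx ≤ (B * D) * Nx :=
    mul_le_mul_of_nonneg_right (mul_le_mul_of_nonneg_left hdx0 hB) hNx0
  have hB2 : (B * y0) * D ≤ (B * Ny) * D :=
    mul_le_mul_of_nonneg_right (mul_le_mul_of_nonneg_left hy0N hB) hD0
  nlinarith [hB1, hB2]

private lemma Q3_diff
    (ha : ∀ i j k, 0 ≤ a i j k) (hC : 1 ≤ C) (hQ : 1 ≤ Q)
    (key : ∀ i k j : ℕ, 1 ≤ k → k ≤ i → k ≤ j →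
      a j (i - k) k ≤ C * Q * (i : ℝ) * (1 + (j : ℝ)))
    (i : ℕ) (x y : ℕ → ℝ) (hx : ∀ m, 0 ≤ x m) (hy : ∀ m, 0 ≤ y m)
    (hxs : Summable fun m : ℕ => (1 + (m : ℝ)) * x m)
    (hys : Summable fun m : ℕ => (1 + (m : ℝ)) * y m)
    (hd : Summable fun m : ℕ => (1 + (m : ℝ)) * |x m - y m|) :
    |Qi3 a x i - Qi3 a y i| ≤ C * Q * ((i : ℝ) * (i : ℝ)) *
      ((((∑' m : ℕ, (1 + (m : ℝ)) * x m) + ∑' m : ℕ, (1 + (m : ℝ)) * y m)) *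
        ∑' m : ℕ, (1 + (m : ℝ)) * |x m - y m|) := by
  have hC0 : (0:ℝ) ≤ C := zero_le_one.trans hC
  have hQ0 : (0:ℝ) ≤ Q := zero_le_one.trans hQ
  set Nx := ∑' m : ℕ, (1 + (m : ℝ)) * x m with hNx
  set Ny := ∑' m : ℕ, (1 + (m : ℝ)) * y m with hNy
  set D := ∑' m : ℕ, (1 + (m : ℝ)) * |x m - y m| with hDd
  have hsub : Qi3 a x i - Qi3 a y i = ∑ k ∈ Finset.Icc 1 i,
      ((∑' j : ℕ, if k ≤ j then a j (i - k) k * x j * x (i - k) else 0) -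
        ∑' j : ℕ, if k ≤ j then a j (i - k) k * y j * y (i - k) else 0) := by
    rw [Qi3, Qi3, ← Finset.sum_sub_distrib]
  rw [hsub]
  refine (Finset.abs_sum_le_sum_abs _ _).trans ?_
  have hcard : (Finset.Icc 1 i).card = i := by
    rw [Nat.card_Icc]; omega
  have hstep : ∀ k ∈ Finset.Icc 1 i,
      |(∑' j : ℕ, if k ≤ j then a j (i - k) k * x j * x (i - k) else 0) -
        ∑' j : ℕ, if k ≤ j then a j (i - k) k * y j * y (i - k) else 0| ≤
      (C * Q * (i : ℝ)) * ((Nx + Ny) * D) := by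
    intro k hk
    rcases Finset.mem_Icc.mp hk with ⟨hk1, hki⟩
    have hdx0 : |x (i - k) - y (i - k)| ≤ D := by
      have h1 : |x (i-k) - y (i-k)| ≤ (1 + ((i-k:ℕ):ℝ)) * |x (i-k) - y (i-k)| := by
        nlinarith [abs_nonneg (x (i-k) - y (i-k)), Nat.cast_nonneg (α := ℝ) (i-k)]
      refine h1.trans (Summable.le_tsum hd (i-k) fun m _ => ?_)
      positivity
    have hy0N : y (i - k) ≤ Ny := by
      have h1 : y (i-k) ≤ (1 + ((i-k:ℕ):ℝ)) * y (i-k) := by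
        nlinarith [hy (i-k), Nat.cast_nonneg (α := ℝ) (i-k)]
      refine h1.trans (Summable.le_tsum hys (i-k) fun m _ => ?_)
      have := hy m; positivity
    exact gen_inner_diff (C * Q * (i:ℝ)) (by positivity)
      (fun j => a j (i - k) k) (fun j => ha _ _ _) (fun j => k ≤ j)
      (fun j hj => key i k j hk1 hki hj) x y (x (i-k)) (y (i-k)) hx hy
      (hx _) (hy _) hxs hys hd hdx0 hy0N
  refine (Finset.sum_le_card_nsmul _ _ _ hstep).trans ?_
  rw [hcard, nsmul_eq_mul]
  have hD0 : 0 ≤ D := tsum_nonneg fun m => by positivity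
  have hNx0 : 0 ≤ Nx := tsum_nonneg fun m => by have := hx m; positivity
  have hNy0 : 0 ≤ Ny := tsum_nonneg fun m => by have := hy m; positivity
  have : (i:ℝ) * ((C * Q * (i:ℝ)) * ((Nx + Ny) * D)) =
      C * Q * ((i : ℝ) * (i : ℝ)) * ((Nx + Ny) * D) := by ring
  linarith [this.le]

private lemma Q4_diff
    (ha : ∀ i j k, 0 ≤ a i j k) (hC : 1 ≤ C) (hQ : 1 ≤ Q)
    (key : ∀ i k j : ℕ, 1 ≤ k → k ≤ i →
      a i j k ≤ C * Q * ((i : ℝ) * (i : ℝ)) * (1 + (j : ℝ)))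
    (i : ℕ) (x y : ℕ → ℝ) (hx : ∀ m, 0 ≤ x m) (hy : ∀ m, 0 ≤ y m)
    (hxs : Summable fun m : ℕ => (1 + (m : ℝ)) * x m)
    (hys : Summable fun m : ℕ => (1 + (m : ℝ)) * y m)
    (hd : Summable fun m : ℕ => (1 + (m : ℝ)) * |x m - y m|) :
    |Qi4 a x i - Qi4 a y i| ≤ C * Q * ((i : ℝ) * (i : ℝ) * (i : ℝ)) *
      ((((∑' m : ℕ, (1 + (m : ℝ)) * x m) + ∑' m : ℕ, (1 + (m : ℝ)) * y m)) *
        ∑' m : ℕ, (1 + (m : ℝ)) * |x m - y m|) := by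
  have hC0 : (0:ℝ) ≤ C := zero_le_one.trans hC
  have hQ0 : (0:ℝ) ≤ Q := zero_le_one.trans hQ
  set Nx := ∑' m : ℕ, (1 + (m : ℝ)) * x m with hNx
  set Ny := ∑' m : ℕ, (1 + (m : ℝ)) * y m with hNy
  set D := ∑' m : ℕ, (1 + (m : ℝ)) * |x m - y m| with hDd
  have hsub : Qi4 a x i - Qi4 a y i = ∑ k ∈ Finset.Icc 1 i,
      ((∑' j : ℕ, a i j k * y j * y i) - ∑' j : ℕ, a i j k * x j * x i) := by
    rw [Qi4, Qi4, Finset.sum_sub_distrib]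
    ring
  rw [hsub]
  refine (Finset.abs_sum_le_sum_abs _ _).trans ?_
  have hcard : (Finset.Icc 1 i).card = i := by
    rw [Nat.card_Icc]; omega
  have hstep : ∀ k ∈ Finset.Icc 1 i,
      |(∑' j : ℕ, a i j k * y j * y i) - ∑' j : ℕ, a i j k * x j * x i| ≤
      (C * Q * ((i : ℝ) * (i:ℝ))) * ((Nx + Ny) * D) := by
    intro k hk
    rcases Finset.mem_Icc.mp hk with ⟨hk1, hki⟩
    have hdx0 : |x i - y i| ≤ D := by
      have h1 : |x i - y i| ≤ (1 + (i:ℝ)) * |x i - y i| := by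
        nlinarith [abs_nonneg (x i - y i), Nat.cast_nonneg (α := ℝ) i]
      refine h1.trans (Summable.le_tsum hd i fun m _ => ?_)
      positivity
    have hy0N : y i ≤ Ny := by
      have h1 : y i ≤ (1 + (i:ℝ)) * y i := by
        nlinarith [hy i, Nat.cast_nonneg (α := ℝ) i]
      refine h1.trans (Summable.le_tsum hys i fun m _ => ?_)
      have := hy m; positivity
    have hgen := gen_inner_diff (C * Q * ((i:ℝ) * (i:ℝ))) (by positivity)
      (fun j => a i j k) (fun j => ha _ _ _) (fun _ => True)
      (fun j _ => key i k j hk1 hki) x y (x i) (y i) hx hy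
      (hx _) (hy _) hxs hys hd hdx0 hy0N
    have hx_eq : (∑' j : ℕ, if True then a i j k * x j * x i else 0)
        = ∑' j : ℕ, a i j k * x j * x i := tsum_congr fun j => if_pos trivial
    have hy_eq : (∑' j : ℕ, if True then a i j k * y j * y i else 0)
        = ∑' j : ℕ, a i j k * y j * y i := tsum_congr fun j => if_pos trivial
    rw [hx_eq, hy_eq] at hgen
    rw [abs_sub_comm]
    exact hgen
  refine (Finset.sum_le_card_nsmul _ _ _ hstep).trans ?_
  rw [hcard, nsmul_eq_mul]
  have hD0 : 0 ≤ D := tsum_nonneg fun m => by positivity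
  have : (i:ℝ) * ((C * Q * ((i:ℝ) * (i:ℝ))) * ((Nx + Ny) * D)) =
      C * Q * ((i : ℝ) * (i : ℝ) * (i : ℝ)) * ((Nx + Ny) * D) := by ring
  linarith [this.le]

private lemma deriv_of_integral_rep {S : Set ℝ}
    (hS : S = Set.Ici 0 ∨ ∃ T : ℝ, 0 < T ∧ S = Set.Ico 0 T)
    {g : ℝ → ℝ} (hg : ContinuousOn g S) {φ : ℝ → ℝ} {A : ℝ}
    (hrep : ∀ u ∈ S, φ u = A + ∫ s in (0:ℝ)..u, g s) :
    ∀ t ∈ S, HasDerivWithinAt φ (g t) S t := by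
  have hmeasS : MeasurableSet S := by
    rcases hS with rfl | ⟨T, _, rfl⟩
    · exact measurableSet_Ici
    · exact measurableSet_Ico
  have hnonneg : ∀ t ∈ S, (0:ℝ) ≤ t := by
    rcases hS with rfl | ⟨T, hT, rfl⟩
    · exact fun t ht => ht
    · exact fun t ht => ht.1
  have hsubIci : S ⊆ Set.Ici (0:ℝ) := fun t ht => hnonneg t ht
  have hIccsub : ∀ t ∈ S, Set.Icc (0:ℝ) t ⊆ S := by
    rcases hS with rfl | ⟨T, hT, rfl⟩
    · exact fun t _ u hu => hu.1
    · exact fun t ht u hu => ⟨hu.1, lt_of_le_of_lt hu.2 ht.2⟩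
  intro t ht
  have ht0 : (0:ℝ) ≤ t := hnonneg t ht
  have hInt : IntervalIntegrable g volume 0 t := by
    refine (hg.mono ?_).intervalIntegrable
    rw [Set.uIcc_of_le ht0]
    exact hIccsub t ht
  have hF : HasDerivWithinAt (fun u => ∫ s in (0:ℝ)..u, g s) (g t) S t := by
    rcases eq_or_lt_of_le ht0 with h0 | hpos
    · -- t = 0
      subst h0
      have hmem : S ∈ 𝓝[Set.Ioi (0:ℝ)] (0:ℝ) := by
        rcases hS with rfl | ⟨T, hT, rfl⟩
        · exact Filter.mem_of_superset self_mem_nhdsWithin Set.Ioi_subset_Ici_self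
        · exact Filter.mem_of_superset (Ioo_mem_nhdsGT_of_mem ⟨le_refl 0, hT⟩)
            Set.Ioo_subset_Ico_self
      have hmeasF : StronglyMeasurableAtFilter g (𝓝[Set.Ioi (0:ℝ)] 0) volume :=
        ⟨S, hmem, hg.aestronglyMeasurable hmeasS⟩
      have hcw : ContinuousWithinAt g (Set.Ioi (0:ℝ)) 0 :=
        (hg 0 ht).mono_left (nhdsWithin_le_of_mem hmem)
      have hD := intervalIntegral.integral_hasDerivWithinAt_right
        (s := Set.Ici (0:ℝ)) (t := Set.Ioi (0:ℝ)) hInt hmeasF hcw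
      exact hD.mono hsubIci
    · -- 0 < t
      have hSnhds : S ∈ 𝓝 t := by
        rcases hS with rfl | ⟨T, hT, rfl⟩
        · exact mem_nhds_iff.mpr ⟨Set.Ioi 0, Set.Ioi_subset_Ici_self, isOpen_Ioi, hpos⟩
        · exact mem_nhds_iff.mpr ⟨Set.Ioo 0 T, Set.Ioo_subset_Ico_self, isOpen_Ioo,
            ⟨hpos, ht.2⟩⟩
      have hg_at : ContinuousAt g t := (hg t ht).continuousAt hSnhds
      have hmeasF : StronglyMeasurableAtFilter g (𝓝 t) volume :=
        ⟨S, hSnhds, hg.aestronglyMeasurable hmeasS⟩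
      exact (intervalIntegral.integral_hasDerivAt_right hInt hmeasF hg_at).hasDerivWithinAt
  exact ((hF.const_add A).congr (fun u hu => hrep u hu) (hrep t ht))

private lemma cont_abstract {S : Set ℝ} {c : ℕ → ℝ → ℝ} {G : (ℕ → ℝ) → ℝ} {K : ℝ}
    (hK : 0 ≤ K)
    (hdiff : ∀ x y : ℕ → ℝ, (∀ m, 0 ≤ x m) → (∀ m, 0 ≤ y m) →
      Summable (fun m : ℕ => (1 + (m:ℝ)) * x m) →
      Summable (fun m : ℕ => (1 + (m:ℝ)) * y m) →
      |G x - G y| ≤ K * ((((∑' m : ℕ, (1 + (m:ℝ)) * x m) + ∑' m : ℕ, (1 + (m:ℝ)) * y m)) *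
        ∑' m : ℕ, (1 + (m:ℝ)) * |x m - y m|))
    (hpos : ∀ t ∈ S, ∀ m : ℕ, 0 ≤ c m t)
    (hsum : ∀ t ∈ S, Summable fun m : ℕ => (1 + (m:ℝ)) * c m t)
    (hcont : ∀ m : ℕ, ContinuousOn (c m) S)
    (hmass : ∀ t ∈ S, ∀ s ∈ S, (∑' m : ℕ, (m:ℝ) * c m t) = ∑' m : ℕ, (m:ℝ) * c m s) :
    ContinuousOn (fun t => G (fun n => c n t)) S := by
  intro t0 ht0
  set l := nhdsWithin t0 S with hl
  set N0 : ℝ := ∑' m : ℕ, (1 + (m:ℝ)) * c m t0 with hN0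
  set M : ℝ := ∑' m : ℕ, (m:ℝ) * c m t0 with hM
  set D : ℝ → ℝ := fun t => ∑' m : ℕ, (1 + (m:ℝ)) * |c m t - c m t0| with hD
  -- summability helpers
  have habs_le : ∀ t ∈ S, ∀ m : ℕ,
      (1 + (m:ℝ)) * |c m t - c m t0| ≤ (1 + (m:ℝ)) * c m t + (1 + (m:ℝ)) * c m t0 := by
    intro t ht m
    have h1 : |c m t - c m t0| ≤ c m t + c m t0 := by
      rcases le_total (c m t) (c m t0) with h | h
      · rw [abs_of_nonpos (by linarith)]; linarith [hpos t ht m]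
      · rw [abs_of_nonneg (by linarith)]; linarith [hpos t0 ht0 m]
    have h0 : (0:ℝ) ≤ 1 + (m:ℝ) := by positivity
    nlinarith [mul_le_mul_of_nonneg_left h1 h0]
  have hdsum : ∀ t ∈ S, Summable fun m : ℕ => (1 + (m:ℝ)) * |c m t - c m t0| := by
    intro t ht
    exact Summable.of_nonneg_of_le (fun m => by positivity) (habs_le t ht)
      ((hsum t ht).add (hsum t0 ht0))
  have hmsum : ∀ t ∈ S, Summable fun m : ℕ => (m:ℝ) * c m t := by
    intro t ht
    refine Summable.of_nonneg_of_le
      (fun m => mul_nonneg (Nat.cast_nonneg m) (hpos t ht m)) (fun m => ?_) (hsum t ht)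
    nlinarith [hpos t ht m]
  -- Tendsto D → 0 (Scheffé argument)
  have hDtend : Filter.Tendsto D l (nhds 0) := by
    have hb_sum : Summable (fun m : ℕ => (m:ℝ) * c m t0) := hmsum t0 ht0
    have hmin_t : Filter.Tendsto
        (fun t => ∑' m : ℕ, min ((m:ℝ) * c m t) ((m:ℝ) * c m t0)) l (nhds M) := by
      have h := tendsto_tsum_of_dominated_convergence (𝓕 := l)
        (f := fun t (m : ℕ) => min ((m:ℝ) * c m t) ((m:ℝ) * c m t0))
        (g := fun m : ℕ => (m:ℝ) * c m t0) (bound := fun m : ℕ => (m:ℝ) * c m t0)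
        hb_sum ?_ ?_
      · exact h
      · intro m
        have hc : Filter.Tendsto (c m) l (nhds (c m t0)) := hcont m t0 ht0
        have h2 : Filter.Tendsto (fun t => min ((m:ℝ) * c m t) ((m:ℝ) * c m t0)) l
            (nhds (min ((m:ℝ) * c m t0) ((m:ℝ) * c m t0))) :=
          Filter.Tendsto.min (tendsto_const_nhds.mul hc) tendsto_const_nhds
        simpa using h2
      · filter_upwards [self_mem_nhdsWithin] with t ht
        intro m
        have h0 : 0 ≤ min ((m:ℝ) * c m t) ((m:ℝ) * c m t0) :=
          le_min (mul_nonneg (Nat.cast_nonneg m) (hpos t ht m))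
            (mul_nonneg (Nat.cast_nonneg m) (hpos t0 ht0 m))
        rw [Real.norm_eq_abs, abs_of_nonneg h0]
        exact min_le_right _ _
    have hE_eq : ∀ᶠ t in l, (∑' m : ℕ, (m:ℝ) * |c m t - c m t0|) =
        2 * M - 2 * ∑' m : ℕ, min ((m:ℝ) * c m t) ((m:ℝ) * c m t0) := by
      filter_upwards [self_mem_nhdsWithin] with t ht
      have hst : Summable fun m : ℕ => (m:ℝ) * c m t := hmsum t ht
      have hminsum : Summable fun m : ℕ => min ((m:ℝ) * c m t) ((m:ℝ) * c m t0) :=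
        Summable.of_nonneg_of_le
          (fun m => le_min (mul_nonneg (Nat.cast_nonneg m) (hpos t ht m))
            (mul_nonneg (Nat.cast_nonneg m) (hpos t0 ht0 m)))
          (fun m => min_le_right _ _) hb_sum
      have hper : ∀ m : ℕ, (m:ℝ) * |c m t - c m t0| =
          ((m:ℝ) * c m t + (m:ℝ) * c m t0) - 2 * min ((m:ℝ) * c m t) ((m:ℝ) * c m t0) := by
        intro m
        rcases le_total (c m t) (c m t0) with h | h
        · rw [abs_of_nonpos (by linarith),
            min_eq_left (mul_le_mul_of_nonneg_left h (Nat.cast_nonneg m))]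
          ring
        · rw [abs_of_nonneg (by linarith),
            min_eq_right (mul_le_mul_of_nonneg_left h (Nat.cast_nonneg m))]
          ring
      calc (∑' m : ℕ, (m:ℝ) * |c m t - c m t0|)
          = ∑' m : ℕ, (((m:ℝ) * c m t + (m:ℝ) * c m t0) -
              2 * min ((m:ℝ) * c m t) ((m:ℝ) * c m t0)) := tsum_congr hper
        _ = (∑' m : ℕ, ((m:ℝ) * c m t + (m:ℝ) * c m t0)) -
              ∑' m : ℕ, 2 * min ((m:ℝ) * c m t) ((m:ℝ) * c m t0) :=
            Summable.tsum_sub (hst.add hb_sum) (hminsum.mul_left 2)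
        _ = ((∑' m : ℕ, (m:ℝ) * c m t) + M) -
              2 * ∑' m : ℕ, min ((m:ℝ) * c m t) ((m:ℝ) * c m t0) := by
            rw [Summable.tsum_add hst hb_sum, tsum_mul_left]
        _ = 2 * M - 2 * ∑' m : ℕ, min ((m:ℝ) * c m t) ((m:ℝ) * c m t0) := by
            rw [hmass t ht t0 ht0]; ring
    have hEtend : Filter.Tendsto (fun t => ∑' m : ℕ, (m:ℝ) * |c m t - c m t0|) l (nhds 0) := by
      have h2 : Filter.Tendsto
          (fun t => 2 * M - 2 * ∑' m : ℕ, min ((m:ℝ) * c m t) ((m:ℝ) * c m t0)) l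
          (nhds (2 * M - 2 * M)) := tendsto_const_nhds.sub (hmin_t.const_mul 2)
      rw [sub_self] at h2
      exact Filter.Tendsto.congr' (hE_eq.mono fun t h => h.symm) h2
    -- D t ≤ |c 0 t - c 0 t0| + 2 * E t
    have hDle : ∀ᶠ t in l, D t ≤ |c 0 t - c 0 t0| +
        2 * ∑' m : ℕ, (m:ℝ) * |c m t - c m t0| := by
      filter_upwards [self_mem_nhdsWithin] with t ht
      have hds := hdsum t ht
      have hE_sum : Summable fun m : ℕ => (m:ℝ) * |c m t - c m t0| := by
        refine Summable.of_nonneg_of_le (fun m => by positivity) (fun m => ?_) hds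
        nlinarith [abs_nonneg (c m t - c m t0)]
      have hshift : Summable fun m : ℕ => (1 + ((m+1:ℕ):ℝ)) * |c (m+1) t - c (m+1) t0| := by
        have := hds.comp_injective (add_left_injective 1)
        refine this.congr fun m => ?_
        simp [Function.comp]
      have hshift' : Summable fun m : ℕ => ((m+1:ℕ):ℝ) * |c (m+1) t - c (m+1) t0| := by
        refine Summable.of_nonneg_of_le (fun m => by positivity) (fun m => ?_) hshift
        have h0 : (0:ℝ) ≤ ((m+1:ℕ):ℝ) := Nat.cast_nonneg _
        nlinarith [abs_nonneg (c (m+1) t - c (m+1) t0)]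
      have h1 : D t = (1 + ((0:ℕ):ℝ)) * |c 0 t - c 0 t0| +
          ∑' m : ℕ, (1 + ((m+1:ℕ):ℝ)) * |c (m+1) t - c (m+1) t0| := by
        rw [hD]
        exact Summable.tsum_eq_zero_add hds
      have h2 : (∑' m : ℕ, (m:ℝ) * |c m t - c m t0|) =
          ∑' m : ℕ, ((m+1:ℕ):ℝ) * |c (m+1) t - c (m+1) t0| := by
        rw [Summable.tsum_eq_zero_add hE_sum]
        simp
      have h3 : (∑' m : ℕ, (1 + ((m+1:ℕ):ℝ)) * |c (m+1) t - c (m+1) t0|) ≤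
          2 * ∑' m : ℕ, ((m+1:ℕ):ℝ) * |c (m+1) t - c (m+1) t0| := by
        rw [← tsum_mul_left]
        refine Summable.tsum_le_tsum (fun m => ?_) hshift (hshift'.mul_left 2)
        have h5 : (1 + ((m+1:ℕ):ℝ)) ≤ 2 * ((m+1:ℕ):ℝ) := by
          push_cast; linarith [Nat.cast_nonneg (α := ℝ) m]
        have h6 := mul_le_mul_of_nonneg_right h5 (abs_nonneg (c (m+1) t - c (m+1) t0))
        linarith [h6]
      rw [h1, h2]
      have h4 : (1 + ((0:ℕ):ℝ)) = 1 := by norm_num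
      rw [h4, one_mul]
      linarith [h3]
    have hD0 : ∀ᶠ t in l, 0 ≤ D t :=
      Filter.Eventually.of_forall fun t => tsum_nonneg fun m => by positivity
    refine squeeze_zero' hD0 hDle ?_
    have h1 : Filter.Tendsto (fun t => |c 0 t - c 0 t0|) l (nhds 0) := by
      have hc := hcont 0 t0 ht0
      have := tendsto_iff_dist_tendsto_zero.mp hc
      simpa [Real.dist_eq] using this
    have h2 := h1.add (hEtend.const_mul 2)
    simpa using h2
  -- conclude
  have hN_le : ∀ᶠ t in l, (∑' m : ℕ, (1 + (m:ℝ)) * c m t) ≤ N0 + D t := by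
    filter_upwards [self_mem_nhdsWithin] with t ht
    have h1 : ∀ m : ℕ, (1 + (m:ℝ)) * c m t ≤
        (1 + (m:ℝ)) * c m t0 + (1 + (m:ℝ)) * |c m t - c m t0| := by
      intro m
      have h2 : c m t ≤ c m t0 + |c m t - c m t0| := by
        have := le_abs_self (c m t - c m t0); linarith
      have h0 : (0:ℝ) ≤ 1 + (m:ℝ) := by positivity
      nlinarith [mul_le_mul_of_nonneg_left h2 h0]
    calc (∑' m : ℕ, (1 + (m:ℝ)) * c m t)
        ≤ ∑' m : ℕ, ((1 + (m:ℝ)) * c m t0 + (1 + (m:ℝ)) * |c m t - c m t0|) :=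
          Summable.tsum_le_tsum h1 (hsum t ht) ((hsum t0 ht0).add (hdsum t ht))
      _ = N0 + D t := by rw [Summable.tsum_add (hsum t0 ht0) (hdsum t ht)]
  have hbound_ev : ∀ᶠ t in l, dist (G (fun n => c n t)) (G (fun n => c n t0)) ≤
      K * ((2 * N0 + D t) * D t) := by
    filter_upwards [self_mem_nhdsWithin, hN_le] with t ht hNt
    rw [Real.dist_eq]
    have h := hdiff (fun n => c n t) (fun n => c n t0) (hpos t ht) (hpos t0 ht0)
      (hsum t ht) (hsum t0 ht0)
    refine h.trans ?_
    have hD0' : 0 ≤ D t := tsum_nonneg fun m => by positivity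
    have h2 : ((∑' m : ℕ, (1 + (m:ℝ)) * c m t) + N0) ≤ 2 * N0 + D t := by
      linarith [hNt]
    exact mul_le_mul_of_nonneg_left (mul_le_mul_of_nonneg_right h2 hD0') hK
  have hgoal : Filter.Tendsto (fun t => G (fun n => c n t)) l (nhds (G (fun n => c n t0))) := by
    rw [tendsto_iff_dist_tendsto_zero]
    refine squeeze_zero' (Filter.Eventually.of_forall fun t => dist_nonneg) hbound_ev ?_
    have h3 : Filter.Tendsto (fun t => K * ((2 * N0 + D t) * D t)) l
        (nhds (K * ((2 * N0 + 0) * 0))) :=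
      tendsto_const_nhds.mul ((tendsto_const_nhds.add hDtend).mul hDtend)
    simpa using h3
  exact hgoal

private lemma Qtot_diff
    (ha : ∀ i j k, 0 ≤ a i j k) (hC : 1 ≤ C) (hQ : 1 ≤ Q) (hq : ∀ i k, 0 ≤ q i k)
    (hqsum : ∀ i : ℕ, 1 ≤ i →
      ∑ k ∈ Finset.Icc 1 i, (k : ℝ) * ((i : ℝ) - k + 1) * q i k ≤ Q * i)
    (hbound : ∀ i j k : ℕ, 1 ≤ k → k ≤ i →
      a i j k ≤ C * ((i : ℝ) - k + 1) * ((j : ℝ) + k) * q i k)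
    (i : ℕ) (x y : ℕ → ℝ) (hx : ∀ m, 0 ≤ x m) (hy : ∀ m, 0 ≤ y m)
    (hxs : Summable fun m : ℕ => (1 + (m : ℝ)) * x m)
    (hys : Summable fun m : ℕ => (1 + (m : ℝ)) * y m) :
    |(Qi1 a x i + Qi2 a x i + Qi3 a x i + Qi4 a x i) -
      (Qi1 a y i + Qi2 a y i + Qi3 a y i + Qi4 a y i)| ≤
      (C * Q * (1 + ((i:ℝ) + 1) + (i:ℝ) * (i:ℝ) + (i:ℝ) * (i:ℝ) * (i:ℝ))) *
      ((((∑' m : ℕ, (1 + (m : ℝ)) * x m) + ∑' m : ℕ, (1 + (m : ℝ)) * y m)) *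
        ∑' m : ℕ, (1 + (m : ℝ)) * |x m - y m|) := by
  have hd := hd_summable hx hy hxs hys
  have h1 := Q1_diff ha hC hQ (fun i k j hk => keyB1 hC hQ hq hqsum hbound i k j hk)
    i x y hx hy hxs hys
  have h2 := Q2_diff ha hC hQ hq hqsum (fun i k j hk hkj => keyB2 hC hq hbound i k j hk hkj)
    i x y hx hy hxs hys hd
  have h3 := Q3_diff ha hC hQ (fun i k j hk hki hkj => keyB3 hC hQ hq hqsum hbound i k j hk hki hkj)
    i x y hx hy hxs hys hd
  have h4 := Q4_diff ha hC hQ (fun i k j hk hki => keyB4 hC hQ hq hqsum hbound i k j hk hki)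
    i x y hx hy hxs hys hd
  have hsplit : (Qi1 a x i + Qi2 a x i + Qi3 a x i + Qi4 a x i) -
      (Qi1 a y i + Qi2 a y i + Qi3 a y i + Qi4 a y i) =
      (Qi1 a x i - Qi1 a y i) + ((Qi2 a x i - Qi2 a y i) +
        ((Qi3 a x i - Qi3 a y i) + (Qi4 a x i - Qi4 a y i))) := by ring
  rw [hsplit]
  have hb1 := abs_add_le (Qi1 a x i - Qi1 a y i) ((Qi2 a x i - Qi2 a y i) +
    ((Qi3 a x i - Qi3 a y i) + (Qi4 a x i - Qi4 a y i)))
  have hb2 := abs_add_le (Qi2 a x i - Qi2 a y i)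
    ((Qi3 a x i - Qi3 a y i) + (Qi4 a x i - Qi4 a y i))
  have hb3 := abs_add_le (Qi3 a x i - Qi3 a y i) (Qi4 a x i - Qi4 a y i)
  have hfin : C * Q * ((((∑' m : ℕ, (1 + (m : ℝ)) * x m) + ∑' m : ℕ, (1 + (m : ℝ)) * y m)) *
        ∑' m : ℕ, (1 + (m : ℝ)) * |x m - y m|) +
      C * Q * ((i:ℝ) + 1) * ((((∑' m : ℕ, (1 + (m : ℝ)) * x m) + ∑' m : ℕ, (1 + (m : ℝ)) * y m)) *
        ∑' m : ℕ, (1 + (m : ℝ)) * |x m - y m|) +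
      C * Q * ((i:ℝ) * (i:ℝ)) * ((((∑' m : ℕ, (1 + (m : ℝ)) * x m) + ∑' m : ℕ, (1 + (m : ℝ)) * y m)) *
        ∑' m : ℕ, (1 + (m : ℝ)) * |x m - y m|) +
      C * Q * ((i:ℝ) * (i:ℝ) * (i:ℝ)) * ((((∑' m : ℕ, (1 + (m : ℝ)) * x m) + ∑' m : ℕ, (1 + (m : ℝ)) * y m)) *
        ∑' m : ℕ, (1 + (m : ℝ)) * |x m - y m|) =
      (C * Q * (1 + ((i:ℝ) + 1) + (i:ℝ) * (i:ℝ) + (i:ℝ) * (i:ℝ) * (i:ℝ))) *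
      ((((∑' m : ℕ, (1 + (m : ℝ)) * x m) + ∑' m : ℕ, (1 + (m : ℝ)) * y m)) *
        ∑' m : ℕ, (1 + (m : ℝ)) * |x m - y m|) := by ring
  linarith [h1, h2, h3, h4]

end DGEDAux

/-- Theorem 6.1: regularity of mild solutions under the extended growth condition
(valid for all `j ≥ 0`, including `j = 0`), assuming conservation of the total mass.
Each component is continuously differentiable on the time interval. -/
theorem mild_solution_regularity
    (a : ℕ → ℕ → ℕ → ℝ) (ha : ∀ i j k, 0 ≤ a i j k)
    (hzero : ∀ p : ℕ, 1 ≤ p → a p 0 p = 0)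
    (C Q : ℝ) (q : ℕ → ℕ → ℝ)
    (hC : 1 ≤ C) (hQ : 1 ≤ Q) (hq : ∀ i k, 0 ≤ q i k)
    (hqsum : ∀ i : ℕ, 1 ≤ i →
      ∑ k ∈ Finset.Icc 1 i, (k : ℝ) * ((i : ℝ) - k + 1) * q i k ≤ Q * i)
    (hbound : ∀ i j k : ℕ, 1 ≤ k → k ≤ i →
      a i j k ≤ C * ((i : ℝ) - k + 1) * ((j : ℝ) + k) * q i k)
    (S : Set ℝ) (hS : S = Set.Ici 0 ∨ ∃ T : ℝ, 0 < T ∧ S = Set.Ico 0 T)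
    (c0 : ℕ → ℝ) (c : ℕ → ℝ → ℝ)
    (hsol : MildSolIso a c0 S c ∨ MildSolNon a c0 S c)
    (hmass : ∀ t ∈ S, (∑' i : ℕ, (i : ℝ) * c i t) = ∑' i : ℕ, (i : ℝ) * c0 i) :
    ∀ i : ℕ, ∃ f : ℝ → ℝ, ContinuousOn f S ∧
      ∀ t ∈ S, HasDerivWithinAt (c i) (f t) S t := by
    classical
  have hpos : ∀ t ∈ S, ∀ m : ℕ, 0 ≤ c m t := by
    rcases hsol with h | h
    · exact fun t ht m => (h.2.1 t ht).1 m
    · exact fun t ht m => (h.2.1 t ht).1 m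
  have hsum : ∀ t ∈ S, Summable fun m : ℕ => (1 + (m : ℝ)) * c m t := by
    rcases hsol with h | h
    · exact fun t ht => (h.2.1 t ht).2
    · exact fun t ht => (h.2.1 t ht).2
  have hcont : ∀ m : ℕ, ContinuousOn (c m) S := by
    rcases hsol with h | h
    · exact h.2.2.1
    · exact h.2.2.1
  have hmass2 : ∀ t ∈ S, ∀ s ∈ S,
      (∑' m : ℕ, (m : ℝ) * c m t) = ∑' m : ℕ, (m : ℝ) * c m s :=
    fun t ht s hs => (hmass t ht).trans (hmass s hs).symm
  have hC0 : (0:ℝ) ≤ C := zero_le_one.trans hC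
  have hQ0 : (0:ℝ) ≤ Q := zero_le_one.trans hQ
  have hg : ∀ i : ℕ, ContinuousOn (fun t => Qi1 a (fun n => c n t) i +
      Qi2 a (fun n => c n t) i + Qi3 a (fun n => c n t) i + Qi4 a (fun n => c n t) i) S := by
    intro i
    have hK : (0:ℝ) ≤ C * Q * (1 + ((i:ℝ) + 1) + (i:ℝ) * (i:ℝ) + (i:ℝ) * (i:ℝ) * (i:ℝ)) := by
      have h1 : (0:ℝ) ≤ 1 + ((i:ℝ) + 1) + (i:ℝ) * (i:ℝ) + (i:ℝ) * (i:ℝ) * (i:ℝ) := by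
        positivity
      exact mul_nonneg (mul_nonneg hC0 hQ0) h1
    exact cont_abstract
      (G := fun x => Qi1 a x i + Qi2 a x i + Qi3 a x i + Qi4 a x i) hK
      (fun x y hx hy hxs hys => Qtot_diff ha hC hQ hq hqsum hbound i x y hx hy hxs hys)
      hpos hsum hcont hmass2
  intro i
  rcases hsol with h | h
  · refine ⟨_, hg i, ?_⟩
    intro t ht
    exact deriv_of_integral_rep hS (hg i) (fun u hu => (h.2.2.2 i u hu).2.2.2.2.2) t ht
  · rcases Nat.eq_zero_or_pos i with rfl | hi
    · refine ⟨fun _ => 0, continuousOn_const, fun t ht => ?_⟩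
      have h0 : ∀ u ∈ S, c 0 u = c0 0 := h.2.2.2.1
      exact (hasDerivWithinAt_const t S (c0 0)).congr (fun u hu => h0 u hu) (h0 t ht)
    · refine ⟨_, hg i, ?_⟩
      intro t ht
      exact deriv_of_integral_rep hS (hg i) (fun u hu => (h.2.2.2.2 i hi u hu).2.2.2.2.2) t ht
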